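/- Let p be a prime and R a commutative ℚ-algebra. Let X, C ∈ R[[t]] with C having zero constant term and X = exp(C). Let U and V be the p-singular and p-regular parts of X, and let B be the p-regular part of C. Write ch_p(B) for the p-singular part of exp(B) (which has constant term 1, hence is invertible) and sh_p(B) for the p-regular part of exp(B). Then V·U^{-1} = sh_p(B)·ch_p(B)^{-1}; in particular the series Y = V·U^{-1} depends only on the p-regular part of C. -/

import Mathlib

open PowerSeries

/-- The `p`-singular part of a power series `F = Σ fₙ tⁿ`, namely `Σ_{p ∣ n} fₙ tⁿ`. -/
noncomputable def pSingularPart {R : Type*} [CommRing R] (p : ℕ) (F : PowerSeries R) :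
    PowerSeries R :=
  PowerSeries.mk fun n => if p ∣ n then PowerSeries.coeff n F else 0

/-- The `p`-regular part of a power series `F = Σ fₙ tⁿ`, namely `Σ_{p ∤ n} fₙ tⁿ`. -/
noncomputable def pRegularPart {R : Type*} [CommRing R] (p : ℕ) (F : PowerSeries R) :
    PowerSeries R :=
  PowerSeries.mk fun n => if p ∣ n then 0 else PowerSeries.coeff n F

/-- `exp C = Σ_{k≥0} Cᵏ/k!` for a power series `C` with zero constant term over a
commutative `ℚ`-algebra.  (When the constant term of `C` is zero, `coeff n (C ^ k) = 0`
for `k > n`, so the truncated sum below computes the full exponential.) -/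
noncomputable def psExp {R : Type*} [CommRing R] [Algebra ℚ R] (C : PowerSeries R) :
    PowerSeries R :=
  PowerSeries.mk fun n => ∑ k ∈ Finset.range (n + 1),
    ((k.factorial : ℚ)⁻¹) • PowerSeries.coeff n (C ^ k)

set_option linter.unusedSectionVars false

section Aux

variable {R : Type*} [CommRing R] [Algebra ℚ R]

lemma coeff_pow_eq_zero' {C : PowerSeries R} (hC : constantCoeff C = 0) {n k : ℕ}
    (h : n < k) : coeff n (C ^ k) = 0 := by
  have hdvd : (X : PowerSeries R) ^ k ∣ C ^ k :=
    pow_dvd_pow_of_dvd (X_dvd_iff.mpr hC) k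
  exact X_pow_dvd_iff.mp hdvd n h

lemma coeff_psExp {C : PowerSeries R} (hC : constantCoeff C = 0) (n N : ℕ) (hn : n < N) :
    coeff n (psExp C) = ∑ k ∈ Finset.range N, ((k.factorial : ℚ)⁻¹) • coeff n (C ^ k) := by
  rw [psExp, coeff_mk]
  apply Finset.sum_subset
  · intro k hk
    simp only [Finset.mem_range] at hk ⊢; omega
  · intro k hk hk'
    simp only [Finset.mem_range, not_lt] at hk hk'
    rw [coeff_pow_eq_zero' hC (by omega), smul_zero]

lemma psExp_add {A B : PowerSeries R} (hA : constantCoeff A = 0)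
    (hB : constantCoeff B = 0) : psExp (A + B) = psExp A * psExp B := by
  ext n
  -- the common summand
  set g : ℕ → ℕ → R := fun i j =>
    ((i.factorial : ℚ)⁻¹ * (j.factorial : ℚ)⁻¹) • coeff n (A ^ i * B ^ j) with hg
  have hgzero : ∀ i j : ℕ, n < i + j → g i j = 0 := by
    intro i j hij
    have : coeff n (A ^ i * B ^ j) = 0 := by
      have hdvd : (X : PowerSeries R) ^ (i + j) ∣ A ^ i * B ^ j := by
        rw [pow_add]
        exact mul_dvd_mul (pow_dvd_pow_of_dvd (X_dvd_iff.mpr hA) i)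
          (pow_dvd_pow_of_dvd (X_dvd_iff.mpr hB) j)
      exact X_pow_dvd_iff.mp hdvd n hij
    simp [hg, this]
  -- RHS
  have hRHS : coeff n (psExp A * psExp B)
      = ∑ i ∈ Finset.range (n + 1), ∑ j ∈ Finset.range (n + 1), g i j := by
    rw [coeff_mul]
    have : ∀ x ∈ Finset.HasAntidiagonal.antidiagonal n,
        coeff x.1 (psExp A) * coeff x.2 (psExp B)
        = ∑ i ∈ Finset.range (n + 1), ∑ j ∈ Finset.range (n + 1),
            (((i.factorial : ℚ)⁻¹) • coeff x.1 (A ^ i)) *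
            (((j.factorial : ℚ)⁻¹) • coeff x.2 (B ^ j)) := by
      intro x hx
      rw [Finset.HasAntidiagonal.mem_antidiagonal] at hx
      rw [coeff_psExp hA x.1 (n+1) (by omega), coeff_psExp hB x.2 (n+1) (by omega),
        Finset.sum_mul_sum]
    rw [Finset.sum_congr rfl this, Finset.sum_comm]
    refine Finset.sum_congr rfl fun i _ => ?_
    rw [Finset.sum_comm]
    refine Finset.sum_congr rfl fun j _ => ?_
    rw [hg]
    simp only [smul_mul_smul_comm]
    rw [← Finset.smul_sum, ← coeff_mul]
  rw [hRHS]
  -- LHS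
  have hcc : constantCoeff (A + B) = 0 := by simp [hA, hB]
  rw [show ((coeff n) (psExp (A + B))) = _ from coeff_psExp hcc n (n+1) (by omega)]
  have hLHS : ∀ k ∈ Finset.range (n + 1),
      ((k.factorial : ℚ)⁻¹) • coeff n ((A + B) ^ k)
      = ∑ j ∈ Finset.range (k + 1), g j (k - j) := by
    intro k _
    rw [add_pow]
    rw [map_sum, Finset.smul_sum]
    refine Finset.sum_congr rfl fun j hj => ?_
    rw [Finset.mem_range] at hj
    have hjk : j ≤ k := by omega
    have : (A ^ j * B ^ (k - j) * (k.choose j : PowerSeries R))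
        = (k.choose j : ℚ) • (A ^ j * B ^ (k - j)) := by
      rw [Algebra.smul_def]
      push_cast
      ring
    rw [this, PowerSeries.coeff_smul, smul_smul, hg]
    congr 1
    have hfac : (k.choose j : ℚ) * j.factorial * (k - j).factorial = k.factorial := by
      exact_mod_cast congrArg (Nat.cast : ℕ → ℚ)
        (Nat.choose_mul_factorial_mul_factorial hjk)
    have h1 : (j.factorial : ℚ) ≠ 0 := Nat.cast_ne_zero.mpr j.factorial_ne_zero
    have h2 : ((k - j).factorial : ℚ) ≠ 0 := Nat.cast_ne_zero.mpr (k - j).factorial_ne_zero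
    have h3 : (k.factorial : ℚ) ≠ 0 := Nat.cast_ne_zero.mpr k.factorial_ne_zero
    field_simp
    linarith [hfac]
  rw [Finset.sum_congr rfl hLHS]
  -- trim the square to the triangle
  have htrim : ∀ i ∈ Finset.range (n + 1),
      (∑ j ∈ Finset.range (n + 1), g i j) = ∑ j ∈ Finset.range (n + 1 - i), g i j := by
    intro i hi
    rw [Finset.mem_range] at hi
    refine (Finset.sum_subset ?_ ?_).symm
    · intro j hj; rw [Finset.mem_range] at hj ⊢; omega
    · intro j hj hj'
      rw [Finset.mem_range] at hj hj'
      exact hgzero i j (by omega)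
  rw [Finset.sum_congr rfl htrim]
  -- reindex the triangle sums
  rw [show (∑ x ∈ Finset.range (n + 1), ∑ j ∈ Finset.range (x + 1), g j (x - j))
      = ∑ x ∈ (Finset.range (n + 1)).sigma (fun k => Finset.range (k + 1)), g x.2 (x.1 - x.2)
      from (Finset.sum_sigma (Finset.range (n + 1)) (fun k => Finset.range (k + 1))
        (fun x => g x.2 (x.1 - x.2))).symm,
    show (∑ i ∈ Finset.range (n + 1), ∑ j ∈ Finset.range (n + 1 - i), g i j)
      = ∑ x ∈ (Finset.range (n + 1)).sigma (fun i => Finset.range (n + 1 - i)), g x.1 x.2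
      from (Finset.sum_sigma (Finset.range (n + 1)) (fun i => Finset.range (n + 1 - i))
        (fun x => g x.1 x.2)).symm]
  refine Finset.sum_nbij' (fun x => ⟨x.2, x.1 - x.2⟩) (fun x => ⟨x.1 + x.2, x.1⟩)
    ?_ ?_ ?_ ?_ ?_
  · rintro ⟨k, j⟩ h
    simp only [Finset.mem_sigma, Finset.mem_range] at h ⊢
    omega
  · rintro ⟨i, j⟩ h
    simp only [Finset.mem_sigma, Finset.mem_range] at h ⊢
    omega
  · rintro ⟨k, j⟩ h
    simp only [Finset.mem_sigma, Finset.mem_range] at h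
    dsimp only
    exact Sigma.ext (show j + (k - j) = k by omega) (heq_of_eq rfl)
  · rintro ⟨i, j⟩ h
    dsimp only
    exact Sigma.ext rfl (heq_of_eq (show i + j - i = j by omega))
  · rintro ⟨k, j⟩ h
    rfl

section Sing

variable (p : ℕ)

/-- a series is `p`-singular if its coefficients vanish off multiples of `p` -/
def IsPSing {R : Type*} [CommRing R] (S : PowerSeries R) : Prop :=
  ∀ m : ℕ, ¬ p ∣ m → coeff m S = 0

lemma isPSing_one : IsPSing p (1 : PowerSeries R) := by
  intro m hm
  have hm0 : m ≠ 0 := fun h => hm (h ▸ dvd_zero p)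
  simp [coeff_one, hm0]

lemma isPSing_mul {S T : PowerSeries R} (hS : IsPSing p S) (hT : IsPSing p T) :
    IsPSing p (S * T) := by
  intro m hm
  rw [coeff_mul]
  refine Finset.sum_eq_zero fun x hx => ?_
  rw [Finset.HasAntidiagonal.mem_antidiagonal] at hx
  by_cases h1 : p ∣ x.1
  · have h2 : ¬ p ∣ x.2 := fun h2 => hm (hx ▸ dvd_add h1 h2)
    rw [hT x.2 h2, mul_zero]
  · rw [hS x.1 h1, zero_mul]

lemma isPSing_pow {S : PowerSeries R} (hS : IsPSing p S) (k : ℕ) : IsPSing p (S ^ k) := by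
  induction k with
  | zero => simpa using isPSing_one p
  | succ k ih => rw [pow_succ]; exact isPSing_mul p ih hS

lemma isPSing_psExp {S : PowerSeries R} (hS : IsPSing p S) : IsPSing p (psExp S) := by
  intro m hm
  rw [psExp, coeff_mk]
  exact Finset.sum_eq_zero fun k _ => by rw [isPSing_pow p hS k m hm, smul_zero]

lemma isPSing_pSingularPart (C : PowerSeries R) : IsPSing p (pSingularPart p C) := by
  intro m hm
  simp [pSingularPart, hm]

lemma pSingularPart_mul_of_isPSing {S F : PowerSeries R} (hS : IsPSing p S) :
    pSingularPart p (S * F) = S * pSingularPart p F := by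
  ext n
  rw [pSingularPart, coeff_mk, coeff_mul]
  by_cases hn : p ∣ n
  · rw [if_pos hn, coeff_mul]
    refine Finset.sum_congr rfl fun x hx => ?_
    rw [Finset.HasAntidiagonal.mem_antidiagonal] at hx
    by_cases h2 : p ∣ x.2
    · rw [pSingularPart, coeff_mk, if_pos h2]
    · have h1 : ¬ p ∣ x.1 := fun h1 => h2 ((Nat.dvd_add_right h1).mp (hx ▸ hn))
      rw [hS x.1 h1, zero_mul, zero_mul]
  · rw [if_neg hn, coeff_mul]
    refine (Finset.sum_eq_zero fun x hx => ?_).symm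
    rw [Finset.HasAntidiagonal.mem_antidiagonal] at hx
    by_cases h1 : p ∣ x.1
    · have h2 : ¬ p ∣ x.2 := fun h2 => hn (hx ▸ dvd_add h1 h2)
      rw [pSingularPart, coeff_mk, if_neg h2, mul_zero]
    · rw [hS x.1 h1, zero_mul]

lemma pRegularPart_mul_of_isPSing {S F : PowerSeries R} (hS : IsPSing p S) :
    pRegularPart p (S * F) = S * pRegularPart p F := by
  ext n
  rw [pRegularPart, coeff_mk, coeff_mul]
  by_cases hn : p ∣ n
  · rw [if_pos hn, coeff_mul]
    refine (Finset.sum_eq_zero fun x hx => ?_).symm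
    rw [Finset.HasAntidiagonal.mem_antidiagonal] at hx
    by_cases h1 : p ∣ x.1
    · have h2 : p ∣ x.2 := (Nat.dvd_add_right h1).mp (hx ▸ hn)
      rw [pRegularPart, coeff_mk, if_pos h2, mul_zero]
    · rw [hS x.1 h1, zero_mul]
  · rw [if_neg hn, coeff_mul]
    refine Finset.sum_congr rfl fun x hx => ?_
    rw [Finset.HasAntidiagonal.mem_antidiagonal] at hx
    by_cases h2 : p ∣ x.2
    · have h1 : ¬ p ∣ x.1 := fun h1 => hn (hx ▸ dvd_add h1 h2)
      rw [hS x.1 h1, zero_mul, zero_mul]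
    · rw [pRegularPart, coeff_mk, if_neg h2]

lemma pSingularPart_add_pRegularPart (C : PowerSeries R) :
    pSingularPart p C + pRegularPart p C = C := by
  ext n
  rw [map_add, pSingularPart, pRegularPart, coeff_mk, coeff_mk]
  by_cases hn : p ∣ n <;> simp [hn]

lemma constantCoeff_pRegularPart (C : PowerSeries R) :
    constantCoeff (pRegularPart p C) = 0 := by
  rw [← coeff_zero_eq_constantCoeff_apply, pRegularPart, coeff_mk, if_pos (dvd_zero p)]

lemma constantCoeff_pSingularPart (C : PowerSeries R) :
    constantCoeff (pSingularPart p C) = constantCoeff C := by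
  rw [← coeff_zero_eq_constantCoeff_apply, pSingularPart, coeff_mk, if_pos (dvd_zero p)]
  exact coeff_zero_eq_constantCoeff_apply C

lemma constantCoeff_psExp (C : PowerSeries R) : constantCoeff (psExp C) = 1 := by
  rw [← coeff_zero_eq_constantCoeff_apply, psExp, coeff_mk]
  simp

end Sing

end Aux

/-- let `X = exp C` with `C` of zero constant term, `U`,`V` the `p`-singular
and `p`-regular parts of `X`, and `B` the `p`-regular part of `C`.  Write `ch_p(B)` and
`sh_p(B)` for the `p`-singular and `p`-regular parts of `exp B`.  Then
`V·U⁻¹ = sh_p(B)·ch_p(B)⁻¹` (both denominators have constant term 1, hence are invertible;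
we express each quotient as the unique solution of the corresponding cross-multiplied
equation).  In particular `Y = V·U⁻¹` depends only on the `p`-regular part of `C`. -/
theorem stmt5 (p : ℕ) (hp : p.Prime) (R : Type*) [CommRing R] [Algebra ℚ R]
    (C X Y Z : PowerSeries R)
    (hC : PowerSeries.constantCoeff C = 0)
    (hX : X = psExp C)
    (hY : Y * pSingularPart p X = pRegularPart p X)
    (hZ : Z * pSingularPart p (psExp (pRegularPart p C)) =
        pRegularPart p (psExp (pRegularPart p C))) :
    Y = Z := by
  set A := pSingularPart p C with hA
  set B := pRegularPart p C with hB
  have hA0 : constantCoeff A = 0 := by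
    rw [hA, constantCoeff_pSingularPart, hC]
  have hB0 : constantCoeff B = 0 := constantCoeff_pRegularPart p C
  have hX2 : X = psExp A * psExp B := by
    rw [hX, ← pSingularPart_add_pRegularPart p C, psExp_add hA0 hB0]
  have hE : IsPSing p (psExp A) := isPSing_psExp p (isPSing_pSingularPart p C)
  have hU : pSingularPart p X = psExp A * pSingularPart p (psExp B) := by
    rw [hX2, pSingularPart_mul_of_isPSing p hE]
  have hV : pRegularPart p X = psExp A * pRegularPart p (psExp B) := by
    rw [hX2, pRegularPart_mul_of_isPSing p hE]
  set ch := pSingularPart p (psExp B) with hch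
  set sh := pRegularPart p (psExp B) with hsh
  have hY' : Y * (psExp A * ch) = psExp A * sh := by rw [← hU, ← hV]; exact hY
  have hZ' : Z * ch = sh := hZ
  have key : Y * (psExp A * ch) = Z * (psExp A * ch) := by
    rw [hY', ← hZ']; ring
  have hunit : IsUnit (psExp A * ch) := by
    rw [isUnit_iff_constantCoeff, map_mul, constantCoeff_psExp, hch,
      constantCoeff_pSingularPart, constantCoeff_psExp, one_mul]
    exact isUnit_one
  exact hunit.mul_right_cancel key
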